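/- Quadrature truncation error for the bounded nonlocal part: assume (A3), (A4), (A6). Then there is a constant K' > 0, independent of h, δ, α, φ, such that for every φ ∈ C²_b(ℝ^N), δ ∈ (0,1), h > 0, and x ∈ ℝ^N: | I^{α,δ}[φ](x) − I^{α,δ}_h[φ](x) | ≤ K' (h²/δ^σ) ‖D²φ‖_0. -/

import Mathlib

open MeasureTheory Set
open scoped RealInnerProductSpace ENNReal NNReal BigOperators

noncomputable section

/-- Euclidean space ℝ^N. -/
abbrev Euc (N : ℕ) := EuclideanSpace ℝ (Fin N)

/-- `‖g‖₀ ≤ M`. -/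
def SupBd {N : ℕ} (g : Euc N → ℝ) (M : ℝ) : Prop := ∀ x, |g x| ≤ M

/-- `g` is Lipschitz with constant `L`. -/
def LipBd {N : ℕ} (g : Euc N → ℝ) (L : ℝ) : Prop := ∀ x y, |g x - g y| ≤ L * ‖x - y‖

/-- sup bound for a vector-valued function. -/
def VSupBd {N : ℕ} (g : Euc N → Euc N) (M : ℝ) : Prop := ∀ x, ‖g x‖ ≤ M

/-- `‖g‖₀ + Lip(g) ≤ M`. -/
def C01Bd {N : ℕ} (g : Euc N → ℝ) (M : ℝ) : Prop :=
  ∃ M0 L, 0 ≤ M0 ∧ 0 ≤ L ∧ M0 + L ≤ M ∧ SupBd g M0 ∧ LipBd g L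

/-- `‖g‖_{1,β} = ‖g‖₀ + ‖Dg‖₀ + [Dg]_{C^{0,β}} ≤ M`. -/
def C1BetaBd {N : ℕ} (g : Euc N → ℝ) (β M : ℝ) : Prop :=
  ∃ M0 M1 M2, 0 ≤ M0 ∧ 0 ≤ M1 ∧ 0 ≤ M2 ∧ M0 + M1 + M2 ≤ M ∧
    Differentiable ℝ g ∧ SupBd g M0 ∧ (∀ x, ‖gradient g x‖ ≤ M1) ∧
    ∀ x y, ‖gradient g x - gradient g y‖ ≤ M2 * ‖x - y‖ ^ β

/-- bounded `C²` function. -/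
def C2b {N : ℕ} (φ : Euc N → ℝ) : Prop :=
  ContDiff ℝ 2 φ ∧ ∃ M, ∀ i : ℕ, i ≤ 2 → ∀ x, ‖iteratedFDeriv ℝ i φ x‖ ≤ M

/-- bounded `C³` function. -/
def C3b {N : ℕ} (φ : Euc N → ℝ) : Prop :=
  ContDiff ℝ 3 φ ∧ ∃ M, ∀ i : ℕ, i ≤ 3 → ∀ x, ‖iteratedFDeriv ℝ i φ x‖ ≤ M

/-- bounded `C⁴` function. -/
def C4b {N : ℕ} (φ : Euc N → ℝ) : Prop :=
  ContDiff ℝ 4 φ ∧ ∃ M, ∀ i : ℕ, i ≤ 4 → ∀ x, ‖iteratedFDeriv ℝ i φ x‖ ≤ M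

/-- The full nonlocal operator
`I[φ](x) = ∫_{z≠0} (φ(x+η(z)) − φ(x) − 1_{|z|<1} η(z)·∇φ(x)) ν(dz)`. -/
def Iop {N : ℕ} (η : Euc N → Euc N) (ν : Measure (Euc N)) (φ : Euc N → ℝ) (x : Euc N) : ℝ :=
  ∫ z in {z : Euc N | z ≠ 0},
    (φ (x + η z) - φ x -
      Set.indicator {w : Euc N | ‖w‖ < 1} (fun w => ⟪η w, gradient φ x⟫) z) ∂ν

/-- The singular part `I_κ[φ](x)` over `0<|z|<κ`. -/
def IopSing {N : ℕ} (η : Euc N → Euc N) (ν : Measure (Euc N)) (κ : ℝ) (φ : Euc N → ℝ)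
    (x : Euc N) : ℝ :=
  ∫ z in {z : Euc N | 0 < ‖z‖ ∧ ‖z‖ < κ}, (φ (x + η z) - φ x - ⟪η z, gradient φ x⟫) ∂ν

/-- The tail part `I^κ[u,p](x)` over `|z| ≥ κ`. -/
def IopTail {N : ℕ} (η : Euc N → Euc N) (ν : Measure (Euc N)) (κ : ℝ) (u : Euc N → ℝ)
    (p : Euc N) (x : Euc N) : ℝ :=
  ∫ z in {z : Euc N | κ ≤ ‖z‖},
    (u (x + η z) - u x - Set.indicator {w : Euc N | ‖w‖ < 1} (fun w => ⟪η w, p⟫) z) ∂ν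

/-- The truncated (bounded) operator `I^r[φ](x) = ∫_{|z|>r} (φ(x+η(z)) − φ(x)) ν(dz)`. -/
def Itrunc {N : ℕ} (η : Euc N → Euc N) (ν : Measure (Euc N)) (r : ℝ) (φ : Euc N → ℝ)
    (x : Euc N) : ℝ :=
  ∫ z in {z : Euc N | r < ‖z‖}, (φ (x + η z) - φ x) ∂ν

/-- The truncated fractional Laplacian `Δ^{σ,r}[φ](x) = ∫_{|z|>r}(φ(x+z)−φ(x)) |z|^{-N-σ} dz`. -/
def truncFracLap {N : ℕ} (σ r : ℝ) (φ : Euc N → ℝ) (x : Euc N) : ℝ :=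
  ∫ z in {z : Euc N | r < ‖z‖}, (φ (x + z) - φ x) / ‖z‖ ^ ((N : ℝ) + σ)

/-- The fractional Laplacian (up to the normalizing constant) on test functions. -/
def fracLapTest {N : ℕ} (σ : ℝ) (φ : Euc N → ℝ) (x : Euc N) : ℝ :=
  - ∫ z : Euc N,
      (φ (x + z) - φ x -
        Set.indicator {w : Euc N | ‖w‖ < 1} (fun w => ⟪w, gradient φ x⟫) z)
        / ‖z‖ ^ ((N : ℝ) + σ)

/-- Viscosity subsolution of `sup_α { f^α + c^α u − I^α[u] } = 0`. -/
def IsSubSol {N : ℕ} {A : Type*} (f c : A → Euc N → ℝ) (η : A → Euc N → Euc N)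
    (ν : A → Measure (Euc N)) (u : Euc N → ℝ) : Prop :=
  (∃ M, SupBd u M) ∧ UpperSemicontinuous u ∧
    ∀ φ : Euc N → ℝ, C2b φ → ∀ x : Euc N, (∀ y, u y - φ y ≤ u x - φ x) →
      ∀ κ : ℝ, 0 < κ → κ < 1 →
        (⨆ α, f α x + c α x * u x - IopSing (η α) (ν α) κ φ x -
          IopTail (η α) (ν α) κ u (gradient φ x) x) ≤ 0

/-- Viscosity supersolution of `sup_α { f^α + c^α u − I^α[u] } = 0`. -/
def IsSuperSol {N : ℕ} {A : Type*} (f c : A → Euc N → ℝ) (η : A → Euc N → Euc N)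
    (ν : A → Measure (Euc N)) (u : Euc N → ℝ) : Prop :=
  (∃ M, SupBd u M) ∧ LowerSemicontinuous u ∧
    ∀ φ : Euc N → ℝ, C2b φ → ∀ x : Euc N, (∀ y, u x - φ x ≤ u y - φ y) →
      ∀ κ : ℝ, 0 < κ → κ < 1 →
        0 ≤ (⨆ α, f α x + c α x * u x - IopSing (η α) (ν α) κ φ x -
          IopTail (η α) (ν α) κ u (gradient φ x) x)

/-- Viscosity solution of `sup_α { f^α + c^α u − I^α[u] } = 0`. -/
def IsSol {N : ℕ} {A : Type*} (f c : A → Euc N → ℝ) (η : A → Euc N → Euc N)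
    (ν : A → Measure (Euc N)) (u : Euc N → ℝ) : Prop :=
  Continuous u ∧ IsSubSol f c η ν u ∧ IsSuperSol f c η ν u

/-- Viscosity subsolution of `λu + sup_α { f^α − I^α[u] } = 0`. -/
def IsSubSolLam {N : ℕ} {A : Type*} (lam : ℝ) (f : A → Euc N → ℝ) (η : A → Euc N → Euc N)
    (ν : A → Measure (Euc N)) (u : Euc N → ℝ) : Prop :=
  (∃ M, SupBd u M) ∧ UpperSemicontinuous u ∧
    ∀ φ : Euc N → ℝ, C2b φ → ∀ x : Euc N, (∀ y, u y - φ y ≤ u x - φ x) →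
      ∀ κ : ℝ, 0 < κ → κ < 1 →
        lam * u x + (⨆ α, f α x - IopSing (η α) (ν α) κ φ x -
          IopTail (η α) (ν α) κ u (gradient φ x) x) ≤ 0

/-- Viscosity supersolution of `λu + sup_α { f^α − I^α[u] } = 0`. -/
def IsSuperSolLam {N : ℕ} {A : Type*} (lam : ℝ) (f : A → Euc N → ℝ) (η : A → Euc N → Euc N)
    (ν : A → Measure (Euc N)) (u : Euc N → ℝ) : Prop :=
  (∃ M, SupBd u M) ∧ LowerSemicontinuous u ∧
    ∀ φ : Euc N → ℝ, C2b φ → ∀ x : Euc N, (∀ y, u x - φ x ≤ u y - φ y) →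
      ∀ κ : ℝ, 0 < κ → κ < 1 →
        0 ≤ lam * u x + (⨆ α, f α x - IopSing (η α) (ν α) κ φ x -
          IopTail (η α) (ν α) κ u (gradient φ x) x)

/-- Viscosity solution of `λu + sup_α { f^α − I^α[u] } = 0`. -/
def IsSolLam {N : ℕ} {A : Type*} (lam : ℝ) (f : A → Euc N → ℝ) (η : A → Euc N → Euc N)
    (ν : A → Measure (Euc N)) (u : Euc N → ℝ) : Prop :=
  Continuous u ∧ IsSubSolLam lam f η ν u ∧ IsSuperSolLam lam f η ν u

/-! ### Discretization -/

/-- Grid point `h·j`. -/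
def gridPt (N : ℕ) (h : ℝ) (j : Fin N → ℤ) : Euc N := WithLp.toLp 2 (fun l => h * (j l : ℝ))

/-- Multilinear interpolation basis function `ω_j(x; h)`. -/
def wt {N : ℕ} (h : ℝ) (j : Fin N → ℤ) (x : Euc N) : ℝ :=
  ∏ l : Fin N, max 0 (1 - |x l / h - (j l : ℝ)|)

/-- Multilinear interpolation operator `i_h`. -/
def interp {N : ℕ} (h : ℝ) (φ : Euc N → ℝ) (x : Euc N) : ℝ :=
  ∑' j : Fin N → ℤ, φ (gridPt N h j) * wt h j x

/-- The diffusion matrix `a_δ = (1/2)∫_{0<|z|<δ} η(z)η(z)^T ν(dz)`. -/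
def aMat {N : ℕ} (η : Euc N → Euc N) (ν : Measure (Euc N)) (δ : ℝ) :
    Matrix (Fin N) (Fin N) ℝ :=
  Matrix.of fun i l => (1 / 2) * ∫ z in {z : Euc N | 0 < ‖z‖ ∧ ‖z‖ < δ}, η z i * η z l ∂ν

/-- The `i`-th column of a matrix, as a vector in `ℝ^N`. -/
def matCol {N : ℕ} (s : Matrix (Fin N) (Fin N) ℝ) (i : Fin N) : Euc N := WithLp.toLp 2 (fun l => s l i)

/-- The interpolated semi-Lagrangian approximation `L_{δ,k,h}` (with square-root matrix `s`). -/
def SLop {N : ℕ} (s : Matrix (Fin N) (Fin N) ℝ) (k h : ℝ) (φ : Euc N → ℝ) (x : Euc N) : ℝ :=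
  ∑ i : Fin N,
    (interp h φ (x + k • matCol s i) + interp h φ (x - k • matCol s i) - 2 * φ x) / (2 * k ^ 2)

/-- `tr(a · D²φ(x))`. -/
def hessTr {N : ℕ} (a : Matrix (Fin N) (Fin N) ℝ) (φ : Euc N → ℝ) (x : Euc N) : ℝ :=
  ∑ i : Fin N, ∑ l : Fin N,
    a i l * iteratedFDeriv ℝ 2 φ x ![EuclideanSpace.single l (1 : ℝ), EuclideanSpace.single i 1]

/-- The quadrature approximation `I^δ_h` of the tail operator. -/
def quadOp {N : ℕ} (η : Euc N → Euc N) (ν : Measure (Euc N)) (δ h : ℝ) (φ : Euc N → ℝ)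
    (x : Euc N) : ℝ :=
  ∑' j : Fin N → ℤ, (φ (x + gridPt N h j) - φ x) * ∫ z in {z : Euc N | δ < ‖z‖}, wt h j (η z) ∂ν

/-- The quadrature operator `J^δ_h` with weights w.r.t. the measure `|z|^{-N-σ} dz`. -/
def Jquad {N : ℕ} (σ : ℝ) (η : Euc N → Euc N) (δ h : ℝ) (φ : Euc N → ℝ) (x : Euc N) : ℝ :=
  ∑' j : Fin N → ℤ, (φ (x + gridPt N h j) - φ x) *
    ∫ z in {z : Euc N | δ < ‖z‖}, wt h j (η z) / ‖z‖ ^ ((N : ℝ) + σ)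

/-- `u` is a bounded continuous solution of the scheme (S). -/
def SolvesScheme {N : ℕ} {A : Type*} (f c : A → Euc N → ℝ) (η : A → Euc N → Euc N)
    (ν : A → Measure (Euc N)) (sq : A → Matrix (Fin N) (Fin N) ℝ) (δ k h : ℝ)
    (u : Euc N → ℝ) : Prop :=
  Continuous u ∧ (∃ M, SupBd u M) ∧
    ∀ x, (⨆ α, f α x + c α x * u x - SLop (sq α) k h u x - quadOp (η α) (ν α) δ h u x) = 0

/-! ### Mollifiers and fractional heat kernel -/

/-- Mollification `v * ρ_ε`. -/
def mollify {N : ℕ} (ρ : Euc N → ℝ) (ε : ℝ) (v : Euc N → ℝ) (x : Euc N) : ℝ :=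
  ∫ y : Euc N, v y * ((1 / ε ^ N) * ρ (ε⁻¹ • (x - y)))

/-- The fractional heat kernel `K̃^σ(t,·)`, the inverse Fourier transform of `e^{-t|ξ|^σ}`. -/
def fracHeatKernel {N : ℕ} (σ t : ℝ) (x : Euc N) : ℝ :=
  ∫ ξ : Euc N, Real.cos (2 * Real.pi * ⟪x, ξ⟫) * Real.exp (-t * ‖ξ‖ ^ σ)

/-- Fractional heat regularization `v^{[ε]} = v * K̃^σ(ε^σ,·)`. -/
def heatMollify {N : ℕ} (σ ε : ℝ) (v : Euc N → ℝ) (x : Euc N) : ℝ :=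
  ∫ y : Euc N, v (x - y) * fracHeatKernel σ (ε ^ σ) y

/-! ### Powers of the discrete Laplacian -/

/-- The discrete Laplacian `Δ_h`. -/
def discLap {N : ℕ} (h : ℝ) (φ : Euc N → ℝ) (x : Euc N) : ℝ :=
  ∑ l : Fin N,
    (φ (x + h • EuclideanSpace.single l (1 : ℝ)) - 2 * φ x +
      φ (x - h • EuclideanSpace.single l (1 : ℝ))) / h ^ 2

/-- The discrete heat semigroup `e^{tΔ_h}φ(x)` (operator exponential, pointwise). -/
def discHeat {N : ℕ} (h t : ℝ) (φ : Euc N → ℝ) (x : Euc N) : ℝ :=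
  ∑' n : ℕ, (t ^ n / n.factorial) * (discLap h)^[n] φ x

/-- The power of the discrete Laplacian `(−Δ_h)^{σ/2}`. -/
def discFracLap {N : ℕ} (σ h : ℝ) (φ : Euc N → ℝ) (x : Euc N) : ℝ :=
  (1 / Real.Gamma (-(σ / 2))) * ∫ t in Set.Ioi (0 : ℝ), (discHeat h t φ x - φ x) / t ^ (1 + σ / 2)

/-- The normalizing constant `c_{N,σ}` of the fractional Laplacian with symbol `|ξ|^σ`. -/
def fracConst (N : ℕ) (σ : ℝ) : ℝ :=
  2 ^ σ * Real.Gamma (((N : ℝ) + σ) / 2) / (Real.pi ^ ((N : ℝ) / 2) * |Real.Gamma (-(σ / 2))|)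

/-- Singular part of the fractional Laplacian acting on a test function (equation (F)). -/
def fracSing {N : ℕ} (σ κ : ℝ) (φ : Euc N → ℝ) (x : Euc N) : ℝ :=
  ∫ z in {z : Euc N | 0 < ‖z‖ ∧ ‖z‖ < κ},
    (φ x - φ (x + z) +
      Set.indicator {w : Euc N | ‖w‖ < 1} (fun w => ⟪w, gradient φ x⟫) z)
      / ‖z‖ ^ ((N : ℝ) + σ)

/-- Tail part of the fractional Laplacian acting on `u` (equation (F)). -/
def fracTail {N : ℕ} (σ κ : ℝ) (u : Euc N → ℝ) (p : Euc N) (x : Euc N) : ℝ :=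
  ∫ z in {z : Euc N | κ ≤ ‖z‖},
    (u x - u (x + z) + Set.indicator {w : Euc N | ‖w‖ < 1} (fun w => ⟪w, p⟫) z)
      / ‖z‖ ^ ((N : ℝ) + σ)

/-- Viscosity subsolution of (F): `λu + sup_α { f^α + a^α (−Δ)^{σ/2} u } = 0`. -/
def IsSubSolF {N : ℕ} {A : Type*} (σ lam : ℝ) (f : A → Euc N → ℝ) (a : A → ℝ)
    (u : Euc N → ℝ) : Prop :=
  (∃ M, SupBd u M) ∧ UpperSemicontinuous u ∧
    ∀ φ : Euc N → ℝ, C2b φ → ∀ x : Euc N, (∀ y, u y - φ y ≤ u x - φ x) →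
      ∀ κ : ℝ, 0 < κ → κ < 1 →
        lam * u x + (⨆ α, f α x + a α * (fracConst N σ *
          (fracSing σ κ φ x + fracTail σ κ u (gradient φ x) x))) ≤ 0

/-- Viscosity supersolution of (F). -/
def IsSuperSolF {N : ℕ} {A : Type*} (σ lam : ℝ) (f : A → Euc N → ℝ) (a : A → ℝ)
    (u : Euc N → ℝ) : Prop :=
  (∃ M, SupBd u M) ∧ LowerSemicontinuous u ∧
    ∀ φ : Euc N → ℝ, C2b φ → ∀ x : Euc N, (∀ y, u x - φ x ≤ u y - φ y) →
      ∀ κ : ℝ, 0 < κ → κ < 1 →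
        0 ≤ lam * u x + (⨆ α, f α x + a α * (fracConst N σ *
          (fracSing σ κ φ x + fracTail σ κ u (gradient φ x) x)))

/-- Viscosity solution of (F). -/
def IsSolF {N : ℕ} {A : Type*} (σ lam : ℝ) (f : A → Euc N → ℝ) (a : A → ℝ)
    (u : Euc N → ℝ) : Prop :=
  Continuous u ∧ IsSubSolF σ lam f a u ∧ IsSuperSolF σ lam f a u

/-- `u` is a bounded continuous solution of the scheme (Fh). -/
def SolvesFh {N : ℕ} {A : Type*} (σ lam h : ℝ) (f : A → Euc N → ℝ) (a : A → ℝ)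
    (u : Euc N → ℝ) : Prop :=
  Continuous u ∧ (∃ M, SupBd u M) ∧
    ∀ x, lam * u x + (⨆ α, f α x + a α * discFracLap σ h u x) = 0

end

noncomputable section

/-- `u` is a bounded continuous solution of the scheme (S_λ): `λu + sup_α{f^α − L[u] − I_h[u]} = 0`. -/
def SolvesSchemeLam {N : ℕ} {A : Type*} (lam : ℝ) (f : A → Euc N → ℝ) (η : A → Euc N → Euc N)
    (ν : A → Measure (Euc N)) (sq : A → Matrix (Fin N) (Fin N) ℝ) (δ k h : ℝ)
    (u : Euc N → ℝ) : Prop :=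
  Continuous u ∧ (∃ M, SupBd u M) ∧
    ∀ x, lam * u x + (⨆ α, f α x - SLop (sq α) k h u x - quadOp (η α) (ν α) δ h u x) = 0

end

section QTEaux

noncomputable section

namespace QTE
variable {N : ℕ}

def base (h : ℝ) (y : Euc N) : Fin N → ℤ := fun l => ⌊y l / h⌋

def jb (h : ℝ) (y : Euc N) (b : Fin N → Bool) : Fin N → ℤ :=
  fun l => base h y l + if b l then 1 else 0

def wb (h : ℝ) (y : Euc N) (b : Fin N → Bool) : ℝ :=
  ∏ l, (if b l then Int.fract (y l / h) else 1 - Int.fract (y l / h))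

lemma jb_inj (h : ℝ) (y : Euc N) : Function.Injective (jb h y) := by
  intro b b' hbb
  funext l
  have := congrFun hbb l
  simp only [jb, add_right_inj] at this
  cases hb : b l <;> cases hb' : b' l <;> simp [hb, hb'] at this ⊢

lemma wt_support {h : ℝ} {y : Euc N} {j : Fin N → ℤ} (hne : wt h j y ≠ 0) :
    ∃ b, jb h y b = j := by
  refine ⟨fun l => decide (j l = base h y l + 1), ?_⟩
  funext l
  have hl : max 0 (1 - |y l / h - (j l : ℝ)|) ≠ 0 := by
    intro h0
    exact hne (Finset.prod_eq_zero (Finset.mem_univ l) h0)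
  have habs : |y l / h - (j l : ℝ)| < 1 := by
    by_contra hc
    push_neg at hc
    apply hl
    simp only [max_eq_left_iff]
    linarith
  rw [abs_lt] at habs
  have h1 : (j l : ℝ) < y l / h + 1 := by linarith
  have h2 : y l / h - 1 < (j l : ℝ) := by linarith
  have hfl : j l = ⌊y l / h⌋ ∨ j l = ⌊y l / h⌋ + 1 := by
    have hub : j l ≤ ⌊y l / h⌋ + 1 := by
      have : (j l : ℝ) < (⌊y l / h⌋ : ℝ) + 1 + 1 := by
        have := Int.sub_one_lt_floor (y l / h)
        push_cast
        linarith [Int.lt_floor_add_one (y l / h)]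
      exact_mod_cast Int.lt_add_one_iff.mp (by exact_mod_cast this)
    have hlb : ⌊y l / h⌋ ≤ j l := by
      have : ((⌊y l / h⌋ : ℤ) : ℝ) - 1 < j l := by
        have := Int.floor_le (y l / h)
        push_cast
        linarith
      have : (⌊y l / h⌋ : ℤ) - 1 < j l := by exact_mod_cast this
      omega
    omega
  simp only [jb, base]
  rcases hfl with hfl | hfl <;> simp [hfl]

lemma fract_lt_one' (s : ℝ) : Int.fract s < 1 := Int.fract_lt_one s
lemma fract_nonneg' (s : ℝ) : 0 ≤ Int.fract s := Int.fract_nonneg s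

lemma factor_false (s : ℝ) : max 0 (1 - |s - (⌊s⌋ : ℝ)|) = 1 - Int.fract s := by
  have hfr : s - (⌊s⌋ : ℝ) = Int.fract s := Int.self_sub_floor s
  have hf0 : 0 ≤ Int.fract s := Int.fract_nonneg s
  have hf1 : Int.fract s < 1 := Int.fract_lt_one s
  rw [hfr, abs_of_nonneg hf0, max_eq_right (by linarith)]

lemma factor_true (s : ℝ) : max 0 (1 - |s - ((⌊s⌋ : ℝ) + 1)|) = Int.fract s := by
  have hfr : s - (⌊s⌋ : ℝ) = Int.fract s := Int.self_sub_floor s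
  have hf0 : 0 ≤ Int.fract s := Int.fract_nonneg s
  have hf1 : Int.fract s < 1 := Int.fract_lt_one s
  have : s - ((⌊s⌋ : ℝ) + 1) = Int.fract s - 1 := by linarith
  rw [this, abs_of_nonpos (by linarith), max_eq_right (by linarith)]
  ring

lemma wt_jb (h : ℝ) (y : Euc N) (b : Fin N → Bool) : wt h (jb h y b) y = wb h y b := by
  unfold wt wb
  apply Finset.prod_congr rfl
  intro l _
  cases hb : b l
  · simp only [jb, base, hb, Bool.false_eq_true, if_false, add_zero]
    exact factor_false (y l / h)
  · simp only [jb, base, hb, if_true]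
    rw [show ((⌊y l / h⌋ + 1 : ℤ) : ℝ) = (⌊y l / h⌋ : ℝ) + 1 by push_cast; ring]
    exact factor_true (y l / h)

lemma wb_nonneg (h : ℝ) (y : Euc N) (b : Fin N → Bool) : 0 ≤ wb h y b := by
  apply Finset.prod_nonneg
  intro l _
  have hf0 : 0 ≤ Int.fract (y l / h) := Int.fract_nonneg _
  have hf1 : Int.fract (y l / h) < 1 := Int.fract_lt_one _
  cases hb : b l <;> simp [hb] <;> linarith

lemma sum_prod_single (g : Fin N → Bool → ℝ) (c : Bool → ℝ) (l0 : Fin N)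
    (hg : ∀ l, g l true + g l false = 1) :
    ∑ b : Fin N → Bool, (∏ l, g l (b l)) * c (b l0)
      = g l0 true * c true + g l0 false * c false := by
  have key : ∀ b : Fin N → Bool, (∏ l, g l (b l)) * c (b l0)
      = ∏ l, (g l (b l) * if l = l0 then c (b l) else 1) := by
    intro b
    rw [Finset.prod_mul_distrib, Fintype.prod_ite_eq']
  have h2 := Finset.prod_univ_sum (fun _ : Fin N => (Finset.univ : Finset Bool))
    (fun l s => g l s * if l = l0 then c s else 1)
  rw [Fintype.piFinset_univ] at h2
  rw [Finset.sum_congr rfl fun b _ => key b, ← h2]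
  rw [Finset.prod_eq_single l0]
  · simp
  · intro l _ hl
    simp [hl, hg l]
  · simp

lemma sum_wb (h : ℝ) (y : Euc N) : ∑ b : Fin N → Bool, wb h y b = 1 := by
  have h2 := Finset.prod_univ_sum (fun _ : Fin N => (Finset.univ : Finset Bool))
    (fun l s => if s then Int.fract (y l / h) else 1 - Int.fract (y l / h))
  rw [Fintype.piFinset_univ] at h2
  unfold wb
  rw [← h2]
  simp

lemma sum_wb_moment (h : ℝ) (y : Euc N) (l0 : Fin N) :
    ∑ b : Fin N → Bool, wb h y b * ((if b l0 then (1:ℝ) else 0) - Int.fract (y l0 / h)) = 0 := by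
  unfold wb
  rw [sum_prod_single (fun l s => if s then Int.fract (y l / h) else 1 - Int.fract (y l / h))
    (fun s => (if s then (1:ℝ) else 0) - Int.fract (y l0 / h)) l0 (fun l => by simp)]
  simp
  ring

lemma wt_ne_finset_zero (h : ℝ) (y : Euc N) (c : (Fin N → ℤ) → ℝ) :
    ∀ j ∉ Finset.image (jb h y) Finset.univ, c j * wt h j y = 0 := by
  intro j hj
  rcases eq_or_ne (wt h j y) 0 with h0 | h0
  · rw [h0, mul_zero]
  · obtain ⟨b, hb⟩ := wt_support h0
    exact absurd (Finset.mem_image.mpr ⟨b, Finset.mem_univ b, hb⟩) hj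

lemma summable_wt (h : ℝ) (y : Euc N) (c : (Fin N → ℤ) → ℝ) :
    Summable (fun j => c j * wt h j y) :=
  summable_of_ne_finset_zero (wt_ne_finset_zero h y c)

lemma tsum_wt (h : ℝ) (y : Euc N) (c : (Fin N → ℤ) → ℝ) :
    ∑' j, c j * wt h j y = ∑ b : Fin N → Bool, c (jb h y b) * wb h y b := by
  rw [tsum_eq_sum (wt_ne_finset_zero h y c),
    Finset.sum_image (fun b _ b' _ hbb => jb_inj h y hbb)]
  exact Finset.sum_congr rfl fun b _ => by rw [wt_jb]

lemma tsum_wt_one (h : ℝ) (y : Euc N) : ∑' j, wt h j y = 1 := by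
  have := tsum_wt h y (fun _ => 1)
  simp only [one_mul] at this
  rw [this, sum_wb]

lemma wt_nonneg (h : ℝ) (j : Fin N → ℤ) (y : Euc N) : 0 ≤ wt h j y :=
  Finset.prod_nonneg fun l _ => le_max_left _ _

lemma wt_le_one (h : ℝ) (j : Fin N → ℤ) (y : Euc N) : wt h j y ≤ 1 :=
  Finset.prod_le_one (fun l _ => le_max_left _ _) (fun l _ => by
    apply max_le (by norm_num)
    have := abs_nonneg (y l / h - (j l : ℝ))
    linarith)

lemma taylor2 {ψ : Euc N → ℝ} (hψ : ContDiff ℝ 2 ψ) {M2 : ℝ}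
    (hM : ∀ v, ‖iteratedFDeriv ℝ 2 ψ v‖ ≤ M2) (y p : Euc N) :
    |ψ p - ψ y - fderiv ℝ ψ y (p - y)| ≤ M2 * ‖p - y‖ ^ 2 := by
  have hM2 : 0 ≤ M2 := le_trans (norm_nonneg _) (hM y)
  have hd1 : Differentiable ℝ ψ := hψ.differentiable (by norm_num)
  have hc1 : ContDiff ℝ 1 (fderiv ℝ ψ) := hψ.fderiv_right (le_refl _)
  have hd2 : Differentiable ℝ (fderiv ℝ ψ) := hc1.differentiable (by norm_num)
  have hbd2 : ∀ q, ‖fderiv ℝ (fderiv ℝ ψ) q‖ ≤ M2 := by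
    intro q
    have e1 : ‖iteratedFDeriv ℝ 1 (fderiv ℝ ψ) q‖ = ‖iteratedFDeriv ℝ 2 ψ q‖ :=
      norm_iteratedFDeriv_fderiv
    have e2 : ‖iteratedFDeriv ℝ 0 (fderiv ℝ (fderiv ℝ ψ)) q‖ =
        ‖iteratedFDeriv ℝ 1 (fderiv ℝ ψ) q‖ := norm_iteratedFDeriv_fderiv
    calc ‖fderiv ℝ (fderiv ℝ ψ) q‖
        = ‖iteratedFDeriv ℝ 0 (fderiv ℝ (fderiv ℝ ψ)) q‖ := by rw [norm_iteratedFDeriv_zero]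
    _ = ‖iteratedFDeriv ℝ 1 (fderiv ℝ ψ) q‖ := e2
    _ = ‖iteratedFDeriv ℝ 2 ψ q‖ := e1
    _ ≤ M2 := hM q
  have hlip : ∀ q, ‖fderiv ℝ ψ q - fderiv ℝ ψ y‖ ≤ M2 * ‖q - y‖ := fun q =>
    Convex.norm_image_sub_le_of_norm_fderiv_le (fun x _ => hd2 x)
      (fun x _ => hbd2 x) convex_univ (mem_univ y) (mem_univ q)
  have hmain := Convex.norm_image_sub_le_of_norm_fderiv_le'
      (f := ψ) (φ := fderiv ℝ ψ y) (C := M2 * ‖p - y‖) (s := Metric.closedBall y ‖p - y‖)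
      (x := y) (y := p)
      (fun x _ => hd1 x)
      (fun x hx => by
        refine le_trans (hlip x) (mul_le_mul_of_nonneg_left ?_ hM2)
        simpa [Metric.mem_closedBall, dist_eq_norm] using hx)
      (convex_closedBall _ _) (Metric.mem_closedBall_self (norm_nonneg _))
      (by simp [Metric.mem_closedBall, dist_eq_norm])
  rw [Real.norm_eq_abs] at hmain
  calc |ψ p - ψ y - (fderiv ℝ ψ y) (p - y)| ≤ M2 * ‖p - y‖ * ‖p - y‖ := hmain
  _ = M2 * ‖p - y‖ ^ 2 := by ring

lemma interp_err {h : ℝ} (hh : 0 < h) (ψ : Euc N → ℝ) (D : Euc N →L[ℝ] ℝ) {M2 : ℝ}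
    (hM2 : 0 ≤ M2) (y : Euc N)
    (htay : ∀ p, |ψ p - ψ y - D (p - y)| ≤ M2 * ‖p - y‖ ^ 2) :
    |(∑' j, ψ (gridPt N h j) * wt h j y) - ψ y| ≤ N * M2 * h ^ 2 := by
  rw [tsum_wt]
  set v : (Fin N → Bool) → Euc N := fun b => gridPt N h (jb h y b) - y with hv
  have hvco : ∀ b l, v b l = h * ((if b l then (1:ℝ) else 0) - Int.fract (y l / h)) := by
    intro b l
    have h1 : v b l = h * ((jb h y b l : ℝ)) - y l := by
      simp [hv, gridPt]
    have h2 : ((jb h y b l : ℝ)) = (⌊y l / h⌋ : ℝ) + (if b l then 1 else 0) := by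
      simp only [jb, base]
      cases b l <;> simp
    have h3 : y l = h * (y l / h) := by field_simp
    have h4 : Int.fract (y l / h) = y l / h - (⌊y l / h⌋ : ℝ) := (Int.self_sub_floor _).symm
    rw [h1, h2, h4]
    nth_rewrite 2 [h3]
    ring
  have hvnorm : ∀ b, ‖v b‖ ^ 2 ≤ N * h ^ 2 := by
    intro b
    rw [EuclideanSpace.norm_eq, Real.sq_sqrt (by positivity)]
    calc ∑ l, ‖v b l‖ ^ 2 ≤ ∑ _l : Fin N, h ^ 2 := by
          apply Finset.sum_le_sum
          intro l _
          rw [hvco b l, Real.norm_eq_abs, abs_mul, mul_pow, sq_abs]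
          have hf0 := Int.fract_nonneg (y l / h)
          have hf1 := Int.fract_lt_one (y l / h)
          have ht : |((if b l then (1:ℝ) else 0) - Int.fract (y l / h))| ≤ 1 := by
            have hcase : (0:ℝ) ≤ (if b l then (1:ℝ) else 0) ∧ (if b l then (1:ℝ) else 0) ≤ 1 := by
              cases b l <;> norm_num
            rw [abs_le]
            exact ⟨by linarith [hcase.1, hcase.2], by linarith [hcase.1, hcase.2]⟩
          have habs := abs_nonneg ((if b l then (1:ℝ) else 0) - Int.fract (y l / h))
          have hsq : |((if b l then (1:ℝ) else 0) - Int.fract (y l / h))| ^ 2 ≤ 1 := by nlinarith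
          nlinarith [sq_nonneg h]
    _ = N * h ^ 2 := by
          rw [Finset.sum_const, Finset.card_univ, Fintype.card_fin, nsmul_eq_mul]
  have hmom : ∑ b : Fin N → Bool, wb h y b • v b = (0 : Euc N) := by
    ext l
    have happ : (∑ b : Fin N → Bool, wb h y b • v b) l
        = ∑ b : Fin N → Bool, wb h y b * v b l := by
      rw [WithLp.ofLp_sum, Finset.sum_apply]
      rfl
    rw [happ]
    have : ∀ b : Fin N → Bool, wb h y b * v b l
        = h * (wb h y b * ((if b l then (1:ℝ) else 0) - Int.fract (y l / h))) := by
      intro b; rw [hvco b l]; ring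
    rw [Finset.sum_congr rfl fun b _ => this b, ← Finset.mul_sum, sum_wb_moment, mul_zero]
    rfl
  have hDmom : ∑ b : Fin N → Bool, wb h y b * D (v b) = 0 := by
    have : ∑ b : Fin N → Bool, wb h y b * D (v b) = D (∑ b : Fin N → Bool, wb h y b • v b) := by
      rw [map_sum]
      exact Finset.sum_congr rfl fun b _ => by rw [D.map_smul]; rfl
    rw [this, hmom, map_zero]
  have key : (∑ b : Fin N → Bool, ψ (gridPt N h (jb h y b)) * wb h y b) - ψ y
      = ∑ b : Fin N → Bool, wb h y b * (ψ (gridPt N h (jb h y b)) - ψ y - D (v b)) := by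
    simp only [mul_sub]
    rw [Finset.sum_sub_distrib, Finset.sum_sub_distrib, hDmom, ← Finset.sum_mul, sum_wb]
    have : ∀ b : Fin N → Bool, wb h y b * ψ (gridPt N h (jb h y b))
        = ψ (gridPt N h (jb h y b)) * wb h y b := fun b => mul_comm _ _
    rw [Finset.sum_congr rfl fun b _ => this b]
    ring
  rw [key]
  calc |∑ b : Fin N → Bool, wb h y b * (ψ (gridPt N h (jb h y b)) - ψ y - D (v b))|
      ≤ ∑ b : Fin N → Bool, |wb h y b * (ψ (gridPt N h (jb h y b)) - ψ y - D (v b))| :=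
        Finset.abs_sum_le_sum_abs _ _
  _ ≤ ∑ b : Fin N → Bool, wb h y b * (M2 * (N * h ^ 2)) := by
        apply Finset.sum_le_sum
        intro b _
        rw [abs_mul, abs_of_nonneg (wb_nonneg h y b)]
        apply mul_le_mul_of_nonneg_left _ (wb_nonneg h y b)
        have ht := htay (gridPt N h (jb h y b))
        exact le_trans ht (mul_le_mul_of_nonneg_left (hvnorm b) hM2)
  _ = M2 * (N * h ^ 2) := by rw [← Finset.sum_mul, sum_wb, one_mul]
  _ = N * M2 * h ^ 2 := by ring

lemma interp_err' {h : ℝ} (hh : 0 < h) (ψ : Euc N → ℝ) (D : Euc N →L[ℝ] ℝ) {M2 : ℝ}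
    (hM2 : 0 ≤ M2) (y : Euc N)
    (htay : ∀ p, |ψ p - ψ y - D (p - y)| ≤ M2 * ‖p - y‖ ^ 2) :
    |∑' j, (ψ y - ψ (gridPt N h j)) * wt h j y| ≤ N * M2 * h ^ 2 := by
  have hmain := interp_err hh ψ D hM2 y htay
  rw [tsum_wt] at hmain
  rw [tsum_wt]
  have h1 : ∑ b : Fin N → Bool, (ψ y - ψ (gridPt N h (jb h y b))) * wb h y b
      = ψ y - ∑ b : Fin N → Bool, ψ (gridPt N h (jb h y b)) * wb h y b := by
    simp only [sub_mul]
    rw [Finset.sum_sub_distrib, ← Finset.mul_sum, sum_wb, mul_one]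
  rw [h1, abs_sub_comm]
  exact hmain

lemma measure_tail_le {N : ℕ} {σ C K : ℝ} (hσ : 0 < σ) (hC : 0 < C) (hK : 0 < K)
    (ν : Measure (Euc N))
    (hA4 : (∫⁻ z in {z : Euc N | ‖z‖ ≤ 1}, ENNReal.ofReal (‖z‖ ^ 2) ∂ν) +
        ν {z : Euc N | 1 < ‖z‖} ≤ ENNReal.ofReal K)
    (g : Euc N → ℝ)
    (hg : ∀ z : Euc N, 0 < ‖z‖ → ‖z‖ < 1 → 0 ≤ g z ∧ g z ≤ C / ‖z‖ ^ ((N : ℝ) + σ))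
    (hd : ν.restrict {z : Euc N | 0 < ‖z‖ ∧ ‖z‖ < 1} =
        (volume.restrict {z : Euc N | 0 < ‖z‖ ∧ ‖z‖ < 1}).withDensity
          fun z => ENNReal.ofReal (g z))
    {δ : ℝ} (hδ : 0 < δ) (hδ1 : δ < 1) :
    ν {z : Euc N | δ < ‖z‖} ≤ ENNReal.ofReal
      ((2 * K + C * 2 ^ ((N : ℝ) + σ) * ((2:ℝ) ^ σ / ((2:ℝ) ^ σ - 1))
          * (volume (Metric.ball (0 : Euc N) 1)).toReal) * δ⁻¹ ^ σ) := by
  classical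
  set e : ℝ := (N : ℝ) + σ with he
  set vB : ℝ≥0∞ := volume (Metric.ball (0 : Euc N) 1) with hvB
  have hvBfin : vB ≠ ∞ := (measure_ball_lt_top).ne
  have h2σ : (1:ℝ) < (2:ℝ) ^ σ := Real.one_lt_rpow_iff_of_pos (by norm_num) |>.mpr (by norm_num; exact hσ) 
  -- the dyadic radii
  set r : ℕ → ℝ := fun k => (2:ℝ)⁻¹ ^ k with hr
  have hrpos : ∀ k, 0 < r k := fun k => pow_pos (by norm_num) k
  have hrle1 : ∀ k, r k ≤ 1 := fun k => pow_le_one₀ (by norm_num) (by norm_num)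
  set m : ℕ := ⌊Real.logb 2 δ⁻¹⌋₊ + 1 with hm
  set S : ℕ → Set (Euc N) := fun k => {z : Euc N | r (k+1) ≤ ‖z‖ ∧ ‖z‖ < r k} with hS
  have hSmeas : ∀ k, MeasurableSet (S k) := by
    intro k
    exact ((isClosed_le continuous_const continuous_norm).measurableSet).inter
      ((isOpen_lt continuous_norm continuous_const).measurableSet)
  -- covering
  have hsplit : {z : Euc N | δ < ‖z‖} ⊆ (⋃ k ∈ Finset.range m, S k) ∪ {z : Euc N | 1 ≤ ‖z‖} := by
    intro z hz
    rcases lt_or_ge ‖z‖ 1 with hz1 | hz1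
    · left
      have hzpos : 0 < ‖z‖ := lt_trans hδ hz
      have hex : ∃ n, r n ≤ ‖z‖ := by
        obtain ⟨n, hn⟩ := exists_pow_lt_of_lt_one hzpos (by norm_num : (2:ℝ)⁻¹ < 1)
        exact ⟨n, le_of_lt hn⟩
      set n₀ := Nat.find hex with hn₀
      have hn₀le : r n₀ ≤ ‖z‖ := Nat.find_spec hex
      have hn₀pos : n₀ ≠ 0 := by
        intro h0
        rw [h0] at hn₀le
        simp [hr] at hn₀le
        linarith
      obtain ⟨k, hk⟩ : ∃ k, n₀ = k + 1 := ⟨n₀ - 1, (Nat.succ_pred_eq_of_pos (Nat.pos_of_ne_zero hn₀pos)).symm⟩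
      have hklt : ‖z‖ < r k := by
        by_contra hc
        push_neg at hc
        have := Nat.find_min hex (m := k) (by omega)
        exact this hc
      have hkm : k < m := by
        have hrk : δ < r k := lt_of_lt_of_le hz (le_of_lt hklt)
        have h2k : (2:ℝ) ^ k < δ⁻¹ := by
          have : r k = ((2:ℝ) ^ k)⁻¹ := by rw [hr]; simp [inv_pow]
          rw [this] at hrk
          have h2kpos : (0:ℝ) < 2 ^ k := by positivity
          rw [lt_inv_comm₀ hδ h2kpos] at hrk
          exact hrk
        have hlogb : (k : ℝ) ≤ Real.logb 2 δ⁻¹ := by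
          have hmono := Real.logb_le_logb_of_le (one_lt_two) (by positivity : (0:ℝ) < 2 ^ k)
            (le_of_lt h2k)
          have hlk : Real.logb 2 ((2:ℝ) ^ k) = k := by
            rw [Real.logb_pow]
            simp
          rwa [hlk] at hmono
        have := Nat.le_floor (α := ℝ) (by exact_mod_cast hlogb)
        omega
      refine mem_biUnion (Finset.mem_range.mpr hkm) ?_
      exact ⟨by rw [← hk]; exact hn₀le, hklt⟩
    · right; exact hz1
  -- outer part
  have hout : ν {z : Euc N | 1 ≤ ‖z‖} ≤ ENNReal.ofReal K + ENNReal.ofReal K := by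
    have hsub : {z : Euc N | 1 ≤ ‖z‖} ⊆ {z : Euc N | ‖z‖ = 1} ∪ {z : Euc N | 1 < ‖z‖} := by
      intro z hz
      have hz' : (1:ℝ) ≤ ‖z‖ := hz
      rcases eq_or_lt_of_le hz' with hc | hc
      · exact Or.inl hc.symm
      · exact Or.inr hc
    refine le_trans (measure_mono hsub) (le_trans (measure_union_le _ _) (add_le_add ?_ ?_))
    · have hms : MeasurableSet {z : Euc N | ‖z‖ = 1} :=
        (isClosed_eq continuous_norm continuous_const).measurableSet
      have h1 : ν {z : Euc N | ‖z‖ = 1} = ∫⁻ _ in {z : Euc N | ‖z‖ = 1}, 1 ∂ν :=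
        (setLIntegral_one _).symm
      have heq : ∫⁻ _ in {z : Euc N | ‖z‖ = 1}, 1 ∂ν
          = ∫⁻ z in {z : Euc N | ‖z‖ = 1}, ENNReal.ofReal (‖z‖ ^ 2) ∂ν := by
        apply setLIntegral_congr_fun hms
        intro z hz
        have hz1 : ‖z‖ = 1 := hz
        beta_reduce
        rw [hz1]
        norm_num
      have hsub2 : {z : Euc N | ‖z‖ = 1} ⊆ {z : Euc N | ‖z‖ ≤ 1} := fun z hz => le_of_eq hz
      calc ν {z : Euc N | ‖z‖ = 1}
          = ∫⁻ z in {z : Euc N | ‖z‖ = 1}, ENNReal.ofReal (‖z‖ ^ 2) ∂ν := by rw [h1, heq]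
      _ ≤ ∫⁻ z in {z : Euc N | ‖z‖ ≤ 1}, ENNReal.ofReal (‖z‖ ^ 2) ∂ν :=
          lintegral_mono_set hsub2
      _ ≤ ENNReal.ofReal K := le_trans le_self_add hA4
    · exact le_trans le_add_self hA4
  -- dyadic estimate
  have hrr : ∀ j : ℕ, r j = (2:ℝ) ^ (-(j:ℝ)) := by
    intro j
    show (2:ℝ)⁻¹ ^ j = (2:ℝ) ^ (-(j:ℝ))
    rw [inv_pow, ← Real.rpow_natCast (2:ℝ) j, ← Real.rpow_neg (by norm_num)]
  have harith : ∀ k : ℕ, C / (r (k+1)) ^ e * (r k) ^ N = C * 2 ^ e * ((2:ℝ) ^ σ) ^ k := by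
    intro k
    rw [hrr, hrr, ← Real.rpow_natCast ((2:ℝ) ^ (-(k:ℝ))) N,
      ← Real.rpow_mul (by norm_num : (0:ℝ) ≤ 2), ← Real.rpow_natCast ((2:ℝ) ^ σ) k,
      ← Real.rpow_mul (by norm_num : (0:ℝ) ≤ 2), ← Real.rpow_mul (by norm_num : (0:ℝ) ≤ 2),
      div_eq_mul_inv, ← Real.rpow_neg (by norm_num : (0:ℝ) ≤ 2), mul_assoc,
      ← Real.rpow_add (by norm_num : (0:ℝ) < 2), mul_assoc,
      ← Real.rpow_add (by norm_num : (0:ℝ) < 2)]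
    congr 1
    push_cast [he]
    ring
  have hSk : ∀ k : ℕ, ν (S k) ≤ ENNReal.ofReal (C * 2 ^ e * ((2:ℝ) ^ σ) ^ k) * vB := by
    intro k
    have hsub : S k ⊆ {z : Euc N | 0 < ‖z‖ ∧ ‖z‖ < 1} := fun z hz =>
      ⟨lt_of_lt_of_le (hrpos (k+1)) hz.1, lt_of_lt_of_le hz.2 (hrle1 k)⟩
    have h1 : ν (S k) = ν.restrict {z : Euc N | 0 < ‖z‖ ∧ ‖z‖ < 1} (S k) := by
      rw [Measure.restrict_apply (hSmeas k), Set.inter_eq_left.mpr hsub]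
    rw [h1, hd, withDensity_apply _ (hSmeas k), Measure.restrict_restrict (hSmeas k),
      Set.inter_eq_left.mpr hsub]
    have hre : 0 < r (k+1) ^ e := Real.rpow_pos_of_pos (hrpos (k+1)) e
    calc ∫⁻ z in S k, ENNReal.ofReal (g z) ∂volume
        ≤ ∫⁻ _ in S k, ENNReal.ofReal (C / r (k+1) ^ e) ∂volume := by
          apply setLIntegral_mono' (hSmeas k)
          intro z hz
          apply ENNReal.ofReal_le_ofReal
          have hz0 : 0 < ‖z‖ := lt_of_lt_of_le (hrpos (k+1)) hz.1
          have hz1 : ‖z‖ < 1 := lt_of_lt_of_le hz.2 (hrle1 k)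
          refine le_trans (hg z hz0 hz1).2 ?_
          apply div_le_div_of_nonneg_left (le_of_lt hC) hre
          exact Real.rpow_le_rpow (le_of_lt (hrpos (k+1))) hz.1 (by positivity)
    _ = ENNReal.ofReal (C / r (k+1) ^ e) * volume (S k) := by
          rw [setLIntegral_const]
    _ ≤ ENNReal.ofReal (C / r (k+1) ^ e) * volume (Metric.ball (0 : Euc N) (r k)) := by
          apply mul_le_mul_right
          apply measure_mono
          intro z hz
          rw [mem_ball_zero_iff]
          exact hz.2
    _ = ENNReal.ofReal (C / r (k+1) ^ e) * (ENNReal.ofReal (r k ^ Module.finrank ℝ (Euc N))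
          * volume (Metric.ball (0 : Euc N) 1)) := by
          rw [Measure.addHaar_ball_of_pos _ _ (hrpos k)]
    _ = ENNReal.ofReal (C * 2 ^ e * ((2:ℝ) ^ σ) ^ k) * vB := by
          rw [finrank_euclideanSpace_fin, ← mul_assoc, ← ENNReal.ofReal_mul (by positivity),
            harith k, hvB]
  -- sum the dyadic pieces
  have hδinv1 : (1:ℝ) ≤ δ⁻¹ := (one_le_inv₀ hδ).mpr (le_of_lt hδ1)
  have hδσ1 : (1:ℝ) ≤ δ⁻¹ ^ σ := by
    calc (1:ℝ) = 1 ^ σ := (Real.one_rpow σ).symm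
    _ ≤ δ⁻¹ ^ σ := Real.rpow_le_rpow (by norm_num) hδinv1 (le_of_lt hσ)
  have hsum : ∑ k ∈ Finset.range m, ((2:ℝ) ^ σ) ^ k
      ≤ (2:ℝ) ^ σ / ((2:ℝ) ^ σ - 1) * δ⁻¹ ^ σ := by
    rw [geom_sum_eq (ne_of_gt h2σ) m]
    have h2m : ((2:ℝ) ^ σ) ^ m ≤ (2:ℝ) ^ σ * δ⁻¹ ^ σ := by
      have hm1 : m - 1 = ⌊Real.logb 2 δ⁻¹⌋₊ := by omega
      have hfl : ((m - 1 : ℕ) : ℝ) ≤ Real.logb 2 δ⁻¹ := by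
        rw [hm1]
        exact Nat.floor_le (Real.logb_nonneg one_lt_two hδinv1)
      have h2m1 : (2:ℝ) ^ ((m - 1 : ℕ) : ℝ) ≤ δ⁻¹ := by
        calc (2:ℝ) ^ ((m - 1 : ℕ) : ℝ) ≤ (2:ℝ) ^ Real.logb 2 δ⁻¹ :=
              Real.rpow_le_rpow_of_exponent_le (by norm_num) hfl
        _ = δ⁻¹ := Real.rpow_logb (by norm_num) (by norm_num) (by positivity)
      have hkey : ((2:ℝ) ^ σ) ^ (m - 1 : ℕ) ≤ δ⁻¹ ^ σ := by
        rw [← Real.rpow_natCast ((2:ℝ) ^ σ) (m - 1), ← Real.rpow_mul (by norm_num : (0:ℝ) ≤ 2),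
          mul_comm σ ((m - 1 : ℕ) : ℝ), Real.rpow_mul (by norm_num : (0:ℝ) ≤ 2)]
        exact Real.rpow_le_rpow (by positivity) h2m1 (le_of_lt hσ)
      have hmm : m = (m - 1) + 1 := by omega
      calc ((2:ℝ) ^ σ) ^ m = (2:ℝ) ^ σ * ((2:ℝ) ^ σ) ^ (m - 1 : ℕ) := by
            conv_lhs => rw [hmm, pow_succ']
      _ ≤ (2:ℝ) ^ σ * δ⁻¹ ^ σ := by
            apply mul_le_mul_of_nonneg_left hkey (by positivity)
    rw [div_le_iff₀ (by linarith)]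
    have hne : (2:ℝ) ^ σ - 1 ≠ 0 := by linarith
    have hq : (2:ℝ) ^ σ / ((2:ℝ) ^ σ - 1) * δ⁻¹ ^ σ * ((2:ℝ) ^ σ - 1)
        = (2:ℝ) ^ σ * δ⁻¹ ^ σ := by
      field_simp
    rw [hq]
    linarith [h2m]
  have hA1 : ν (⋃ k ∈ Finset.range m, S k)
      ≤ ENNReal.ofReal (C * 2 ^ e * ((2:ℝ) ^ σ / ((2:ℝ) ^ σ - 1)) * δ⁻¹ ^ σ) * vB := by
    refine le_trans (measure_biUnion_finset_le _ _) ?_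
    refine le_trans (Finset.sum_le_sum fun k _ => hSk k) ?_
    rw [← Finset.sum_mul]
    apply mul_le_mul_left
    rw [← ENNReal.ofReal_sum_of_nonneg (fun k _ => by positivity)]
    apply ENNReal.ofReal_le_ofReal
    rw [← Finset.mul_sum]
    calc C * 2 ^ e * ∑ k ∈ Finset.range m, ((2:ℝ) ^ σ) ^ k
        ≤ C * 2 ^ e * ((2:ℝ) ^ σ / ((2:ℝ) ^ σ - 1) * δ⁻¹ ^ σ) := by
          apply mul_le_mul_of_nonneg_left hsum (by positivity)
    _ = C * 2 ^ e * ((2:ℝ) ^ σ / ((2:ℝ) ^ σ - 1)) * δ⁻¹ ^ σ := by ring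
  -- combine
  have hGnn : (0:ℝ) ≤ (2:ℝ) ^ σ / ((2:ℝ) ^ σ - 1) := by
    apply div_nonneg (by positivity)
    linarith
  have hvBnn : (0:ℝ) ≤ vB.toReal := ENNReal.toReal_nonneg
  calc ν {z : Euc N | δ < ‖z‖}
      ≤ ν ((⋃ k ∈ Finset.range m, S k) ∪ {z : Euc N | 1 ≤ ‖z‖}) := measure_mono hsplit
  _ ≤ ν (⋃ k ∈ Finset.range m, S k) + ν {z : Euc N | 1 ≤ ‖z‖} := measure_union_le _ _
  _ ≤ ENNReal.ofReal (C * 2 ^ e * ((2:ℝ) ^ σ / ((2:ℝ) ^ σ - 1)) * δ⁻¹ ^ σ) * vB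
        + (ENNReal.ofReal K + ENNReal.ofReal K) := add_le_add hA1 hout
  _ = ENNReal.ofReal (C * 2 ^ e * ((2:ℝ) ^ σ / ((2:ℝ) ^ σ - 1)) * δ⁻¹ ^ σ * vB.toReal
        + 2 * K) := by
        have ha : (0:ℝ) ≤ C * 2 ^ e * ((2:ℝ) ^ σ / ((2:ℝ) ^ σ - 1)) * δ⁻¹ ^ σ :=
          mul_nonneg (mul_nonneg (mul_nonneg (le_of_lt hC)
            (Real.rpow_nonneg (by norm_num) e)) hGnn)
            (Real.rpow_nonneg (by positivity) σ)
        rw [← ENNReal.ofReal_toReal hvBfin, ← ENNReal.ofReal_mul ha,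
          ← ENNReal.ofReal_add (le_of_lt hK) (le_of_lt hK),
          ← ENNReal.ofReal_add (mul_nonneg ha hvBnn) (by linarith)]
        congr 1
        rw [ENNReal.toReal_ofReal hvBnn]
        ring
  _ ≤ ENNReal.ofReal ((2 * K + C * 2 ^ e * ((2:ℝ) ^ σ / ((2:ℝ) ^ σ - 1)) * vB.toReal)
        * δ⁻¹ ^ σ) := by
        apply ENNReal.ofReal_le_ofReal
        have ha : (0:ℝ) ≤ C * 2 ^ e * ((2:ℝ) ^ σ / ((2:ℝ) ^ σ - 1)) :=
          mul_nonneg (mul_nonneg (le_of_lt hC) (Real.rpow_nonneg (by norm_num) e)) hGnn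
        nlinarith [hδσ1, mul_nonneg ha hvBnn, hK]

lemma key_estimate {N : ℕ} {h : ℝ} (hh : 0 < h) (μ : Measure (Euc N)) [IsFiniteMeasure μ]
    (e : Euc N → Euc N) (hem : Measurable e)
    (ψ : Euc N → ℝ) (hψm : Measurable ψ) {Mψ : ℝ} (hψb : ∀ v, |ψ v| ≤ Mψ)
    (Dv : Euc N → Euc N →L[ℝ] ℝ) {M2 : ℝ} (hM2 : 0 ≤ M2)
    (htay : ∀ y p, |ψ p - ψ y - Dv y (p - y)| ≤ M2 * ‖p - y‖ ^ 2) :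
    |(∫ z, ψ (e z) ∂μ) - ∑' j : Fin N → ℤ, ψ (gridPt N h j) * ∫ z, wt h j (e z) ∂μ|
      ≤ N * M2 * h ^ 2 * (μ univ).toReal := by
  have hMψ : 0 ≤ Mψ := le_trans (abs_nonneg _) (hψb 0)
  have habsint : ∀ u : Euc N → ℝ, |∫ z, u z ∂μ| ≤ ∫ z, |u z| ∂μ := fun u => by
    simpa [Real.norm_eq_abs] using norm_integral_le_integral_norm (f := u) (μ := μ)
  have hψe_meas : Measurable fun z => ψ (e z) := hψm.comp hem
  have hwtcont : ∀ j : Fin N → ℤ, Continuous fun y : Euc N => wt h j y := by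
    intro j
    unfold wt
    apply continuous_finset_prod
    intro l _
    have hcoord : Continuous fun y : Euc N => y l := by
      exact (EuclideanSpace.proj (𝕜 := ℝ) l).continuous
    have h1 : Continuous fun y : Euc N => y l / h - (j l : ℝ) :=
      (hcoord.div_const h).sub continuous_const
    exact continuous_const.max (continuous_const.sub h1.abs)
  set W : (Fin N → ℤ) → Euc N → ℝ := fun j z => wt h j (e z) with hW
  have hWm : ∀ j, Measurable (W j) := fun j => ((hwtcont j).measurable).comp hem
  have hWnn : ∀ j z, 0 ≤ W j z := fun j z => wt_nonneg h j (e z)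
  have hWle1 : ∀ j z, W j z ≤ 1 := fun j z => wt_le_one h j (e z)
  have hWsum1 : ∀ z, ∑' j, W j z = 1 := fun z => tsum_wt_one h (e z)
  have hWsummable : ∀ z, Summable fun j => W j z := by
    intro z
    have := summable_wt h (e z) (fun _ => 1)
    simpa using this
  set Kj : (Fin N → ℤ) → ℝ≥0∞ := fun j => ∫⁻ z, ENNReal.ofReal (W j z) ∂μ with hKj
  have hKsum : ∑' j, Kj j = μ univ := by
    rw [hKj, ← lintegral_tsum (fun j => ((hWm j).ennreal_ofReal).aemeasurable)]
    have hpt : ∀ z, ∑' j, ENNReal.ofReal (W j z) = 1 := by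
      intro z
      rw [← ENNReal.ofReal_tsum_of_nonneg (fun j => hWnn j z) (hWsummable z), hWsum1 z]
      exact ENNReal.ofReal_one
    calc ∫⁻ z, ∑' j, ENNReal.ofReal (W j z) ∂μ = ∫⁻ _, 1 ∂μ := by
          apply lintegral_congr hpt
    _ = μ univ := lintegral_one
  have hKfin : ∑' j, Kj j ≠ ∞ := by rw [hKsum]; exact (measure_lt_top μ univ).ne
  have hKjfin : ∀ j, Kj j ≠ ∞ := fun j => ne_top_of_le_ne_top hKfin (ENNReal.le_tsum j)
  set a : (Fin N → ℤ) → ℝ := fun j => (Kj j).toReal with ha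
  have hasummable : Summable a := ENNReal.summable_toReal hKfin
  have hann : ∀ j, 0 ≤ a j := fun j => ENNReal.toReal_nonneg
  have hWint : ∀ j, Integrable (W j) μ := by
    intro j
    refine (integrable_const (1:ℝ)).mono' (hWm j).aestronglyMeasurable ?_
    exact ae_of_all _ fun z => by
      rw [Real.norm_eq_abs, abs_of_nonneg (hWnn j z)]; exact hWle1 j z
  have hWint_eq : ∀ j, ∫ z, W j z ∂μ = a j := by
    intro j
    rw [ha, hKj]
    rw [integral_eq_lintegral_of_nonneg_ae (ae_of_all _ (hWnn j))
      (hWm j).aestronglyMeasurable]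
  have hfW_int : ∀ j, Integrable (fun z => ψ (e z) * W j z) μ := by
    intro j
    refine (integrable_const Mψ).mono'
      ((hψe_meas.mul (hWm j)).aestronglyMeasurable) ?_
    refine ae_of_all _ fun z => ?_
    rw [Real.norm_eq_abs, abs_mul, abs_of_nonneg (hWnn j z)]
    calc |ψ (e z)| * W j z ≤ Mψ * 1 :=
          mul_le_mul (hψb (e z)) (hWle1 j z) (hWnn j z) hMψ
    _ = Mψ := mul_one Mψ
  have hcW_int : ∀ j, Integrable (fun z => ψ (gridPt N h j) * W j z) μ := fun j =>
    (hWint j).const_mul _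
  set F : (Fin N → ℤ) → Euc N → ℝ :=
    fun j z => ψ (e z) * W j z - ψ (gridPt N h j) * W j z with hF
  have hFint : ∀ j, Integrable (F j) μ := fun j => (hfW_int j).sub (hcW_int j)
  have hFb : ∀ j z, (‖F j z‖₊ : ℝ≥0∞)
      ≤ ENNReal.ofReal (2 * Mψ) * ENNReal.ofReal (W j z) := by
    intro j z
    rw [← ENNReal.ofReal_mul (by positivity), ← ENNReal.ofReal_coe_nnreal, coe_nnnorm]
    apply ENNReal.ofReal_le_ofReal
    rw [Real.norm_eq_abs]
    have hFz : F j z = (ψ (e z) - ψ (gridPt N h j)) * W j z := by rw [hF]; ring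
    rw [hFz, abs_mul, abs_of_nonneg (hWnn j z)]
    apply mul_le_mul_of_nonneg_right _ (hWnn j z)
    calc |ψ (e z) - ψ (gridPt N h j)| ≤ |ψ (e z)| + |ψ (gridPt N h j)| := abs_sub _ _
    _ ≤ Mψ + Mψ := add_le_add (hψb _) (hψb _)
    _ = 2 * Mψ := by ring
  have hFl : ∑' j, ∫⁻ z, ‖F j z‖₊ ∂μ ≠ ∞ := by
    have hle : ∑' j, ∫⁻ z, ‖F j z‖₊ ∂μ ≤ ENNReal.ofReal (2 * Mψ) * μ univ := by
      calc ∑' j, ∫⁻ z, ‖F j z‖₊ ∂μ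
          ≤ ∑' j, ENNReal.ofReal (2 * Mψ) * Kj j := by
            apply ENNReal.tsum_le_tsum
            intro j
            calc ∫⁻ z, ‖F j z‖₊ ∂μ
                ≤ ∫⁻ z, ENNReal.ofReal (2 * Mψ) * ENNReal.ofReal (W j z) ∂μ :=
                  lintegral_mono fun z => hFb j z
            _ = ENNReal.ofReal (2 * Mψ) * Kj j := by
                  rw [lintegral_const_mul' _ _ ENNReal.ofReal_ne_top, hKj]
      _ = ENNReal.ofReal (2 * Mψ) * ∑' j, Kj j := ENNReal.tsum_mul_left
      _ = ENNReal.ofReal (2 * Mψ) * μ univ := by rw [hKsum]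
    exact ne_top_of_le_ne_top
      (ENNReal.mul_ne_top ENNReal.ofReal_ne_top (measure_lt_top μ univ).ne) hle
  have hswap : ∫ z, (∑' j, F j z) ∂μ = ∑' j, ∫ z, F j z ∂μ :=
    integral_tsum (fun j => (hFint j).aestronglyMeasurable) hFl
  -- summability of the two families of integrals
  have hb1 : ∀ j, |∫ z, ψ (e z) * W j z ∂μ| ≤ Mψ * a j := by
    intro j
    calc |∫ z, ψ (e z) * W j z ∂μ| ≤ ∫ z, |ψ (e z) * W j z| ∂μ := habsint _
    _ ≤ ∫ z, Mψ * W j z ∂μ := by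
          apply integral_mono (hfW_int j).abs ((hWint j).const_mul Mψ)
          intro z
          show |ψ (e z) * W j z| ≤ Mψ * W j z
          rw [abs_mul, abs_of_nonneg (hWnn j z)]
          exact mul_le_mul_of_nonneg_right (hψb (e z)) (hWnn j z)
    _ = Mψ * a j := by rw [integral_const_mul, hWint_eq j]
  have hb2 : ∀ j, |∫ z, ψ (gridPt N h j) * W j z ∂μ| ≤ Mψ * a j := by
    intro j
    calc |∫ z, ψ (gridPt N h j) * W j z ∂μ| ≤ ∫ z, |ψ (gridPt N h j) * W j z| ∂μ := habsint _
    _ ≤ ∫ z, Mψ * W j z ∂μ := by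
          apply integral_mono (hcW_int j).abs ((hWint j).const_mul Mψ)
          intro z
          show |ψ (gridPt N h j) * W j z| ≤ Mψ * W j z
          rw [abs_mul, abs_of_nonneg (hWnn j z)]
          exact mul_le_mul_of_nonneg_right (hψb _) (hWnn j z)
    _ = Mψ * a j := by rw [integral_const_mul, hWint_eq j]
  have hs1 : Summable fun j => ∫ z, ψ (e z) * W j z ∂μ :=
    Summable.of_norm_bounded (hasummable.mul_left Mψ)
      (fun j => by rw [Real.norm_eq_abs]; exact hb1 j)
  have hs2 : Summable fun j => ∫ z, ψ (gridPt N h j) * W j z ∂μ :=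
    Summable.of_norm_bounded (hasummable.mul_left Mψ)
      (fun j => by rw [Real.norm_eq_abs]; exact hb2 j)
  have hsplitsum : ∑' j, ∫ z, F j z ∂μ
      = (∑' j, ∫ z, ψ (e z) * W j z ∂μ) - ∑' j, ∫ z, ψ (gridPt N h j) * W j z ∂μ := by
    rw [← Summable.tsum_sub hs1 hs2]
    apply tsum_congr
    intro j
    rw [hF, integral_sub (hfW_int j) (hcW_int j)]
  -- the ψ(e z) part sums to the full integral
  have hfWl : ∑' j, ∫⁻ z, ‖ψ (e z) * W j z‖₊ ∂μ ≠ ∞ := by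
    have hle : ∑' j, ∫⁻ z, ‖ψ (e z) * W j z‖₊ ∂μ ≤ ENNReal.ofReal Mψ * μ univ := by
      calc ∑' j, ∫⁻ z, ‖ψ (e z) * W j z‖₊ ∂μ
          ≤ ∑' j, ENNReal.ofReal Mψ * Kj j := by
            apply ENNReal.tsum_le_tsum
            intro j
            calc ∫⁻ z, ‖ψ (e z) * W j z‖₊ ∂μ
                ≤ ∫⁻ z, ENNReal.ofReal Mψ * ENNReal.ofReal (W j z) ∂μ := by
                  apply lintegral_mono
                  intro z
                  show (‖ψ (e z) * W j z‖₊ : ℝ≥0∞)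
                    ≤ ENNReal.ofReal Mψ * ENNReal.ofReal (W j z)
                  rw [← ENNReal.ofReal_mul hMψ, ← ENNReal.ofReal_coe_nnreal, coe_nnnorm]
                  apply ENNReal.ofReal_le_ofReal
                  rw [Real.norm_eq_abs, abs_mul, abs_of_nonneg (hWnn j z)]
                  exact mul_le_mul_of_nonneg_right (hψb (e z)) (hWnn j z)
            _ = ENNReal.ofReal Mψ * Kj j := by
                  rw [lintegral_const_mul' _ _ ENNReal.ofReal_ne_top, hKj]
      _ = ENNReal.ofReal Mψ * ∑' j, Kj j := ENNReal.tsum_mul_left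
      _ = ENNReal.ofReal Mψ * μ univ := by rw [hKsum]
    exact ne_top_of_le_ne_top
      (ENNReal.mul_ne_top ENNReal.ofReal_ne_top (measure_lt_top μ univ).ne) hle
  have hfull : ∑' j, ∫ z, ψ (e z) * W j z ∂μ = ∫ z, ψ (e z) ∂μ := by
    rw [← integral_tsum (f := fun j z => ψ (e z) * W j z) (fun j => (hψe_meas.mul (hWm j)).aestronglyMeasurable) hfWl]
    apply integral_congr_ae
    apply ae_of_all
    intro z
    show ∑' j, ψ (e z) * W j z = ψ (e z)
    rw [tsum_mul_left, hWsum1 z, mul_one]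
  -- rewrite the quadrature sum
  have hquadsum : ∑' j : Fin N → ℤ, ψ (gridPt N h j) * ∫ z, W j z ∂μ
      = ∑' j, ∫ z, ψ (gridPt N h j) * W j z ∂μ := by
    apply tsum_congr
    intro j
    rw [integral_const_mul]
  -- pointwise interpolation bound
  have hpt : ∀ z, |∑' j, F j z| ≤ N * M2 * h ^ 2 := by
    intro z
    have heq : ∀ j : Fin N → ℤ, F j z
        = (ψ (e z) - ψ (gridPt N h j)) * wt h j (e z) := by
      intro j; rw [hF]; ring
    rw [tsum_congr heq]
    exact interp_err' hh ψ (Dv (e z)) hM2 (e z) (fun p => htay (e z) p)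
  -- conclude
  have hfinal : |∫ z, (∑' j, F j z) ∂μ| ≤ N * M2 * h ^ 2 * (μ univ).toReal := by
    have := norm_integral_le_of_norm_le_const (μ := μ)
      (f := fun z => ∑' j, F j z) (C := N * M2 * h ^ 2)
      (ae_of_all _ fun z => by rw [Real.norm_eq_abs]; exact hpt z)
    rwa [Real.norm_eq_abs] at this
  calc |(∫ z, ψ (e z) ∂μ) - ∑' j : Fin N → ℤ, ψ (gridPt N h j) * ∫ z, wt h j (e z) ∂μ|
      = |∫ z, (∑' j, F j z) ∂μ| := by
        rw [hswap, hsplitsum, hquadsum, hfull]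
  _ ≤ N * M2 * h ^ 2 * (μ univ).toReal := hfinal

end QTE

end

end QTEaux

/-- Quadrature truncation error for the bounded nonlocal part. -/
theorem quadrature_truncation_error
    (N : ℕ) (hN : 1 ≤ N) (σ K C : ℝ) (hσ : 0 < σ) (hσ2 : σ < 2) (hK : 0 < K) (hC : 0 < C)
    {A : Type*} [MetricSpace A] [CompactSpace A] [TopologicalSpace.SeparableSpace A] [Nonempty A]
    (η : A → Euc N → Euc N) (ν : A → MeasureTheory.Measure (Euc N))
    (hηm : ∀ α, Measurable (η α))
    (hA3 : ∀ (α : A) (z : Euc N), ‖z‖ < 1 → ‖η α z‖ ≤ K * ‖z‖)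
    (hA4 : ∀ α : A, ν α {0} = 0 ∧
      (∫⁻ z in {z : Euc N | ‖z‖ ≤ 1}, ENNReal.ofReal (‖z‖ ^ 2) ∂ν α) +
        ν α {z : Euc N | 1 < ‖z‖} ≤ ENNReal.ofReal K)
    (hA6 : ∀ α : A, ∃ g : Euc N → ℝ,
      (∀ z : Euc N, 0 < ‖z‖ → ‖z‖ < 1 → 0 ≤ g z ∧ g z ≤ C / ‖z‖ ^ ((N : ℝ) + σ)) ∧
      (ν α).restrict {z : Euc N | 0 < ‖z‖ ∧ ‖z‖ < 1} =
        (MeasureTheory.volume.restrict {z : Euc N | 0 < ‖z‖ ∧ ‖z‖ < 1}).withDensity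
          fun z => ENNReal.ofReal (g z)) :
    ∃ K' : ℝ, 0 < K' ∧ ∀ (α : A) (δ h : ℝ), 0 < δ → δ < 1 → 0 < h →
      ∀ φ : Euc N → ℝ, C2b φ → ∀ M2 : ℝ, (∀ y, ‖iteratedFDeriv ℝ 2 φ y‖ ≤ M2) →
      ∀ x, |Itrunc (η α) (ν α) δ φ x - quadOp (η α) (ν α) δ h φ x| ≤
        K' * (h ^ 2 / δ ^ σ) * M2 := by
  classical
  set vBt : ℝ := (volume (Metric.ball (0 : Euc N) 1)).toReal with hvBt
  have h2σ : (1:ℝ) < (2:ℝ) ^ σ :=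
    Real.one_lt_rpow_iff_of_pos (by norm_num) |>.mpr (by norm_num; exact hσ)
  have hGnn : (0:ℝ) ≤ (2:ℝ) ^ σ / ((2:ℝ) ^ σ - 1) := div_nonneg (by positivity) (by linarith)
  have hvBtnn : (0:ℝ) ≤ vBt := ENNReal.toReal_nonneg
  set Dc : ℝ := 2 * K + C * 2 ^ ((N : ℝ) + σ) * ((2:ℝ) ^ σ / ((2:ℝ) ^ σ - 1)) * vBt with hDc
  have hsecnn : (0:ℝ) ≤ C * 2 ^ ((N : ℝ) + σ) * ((2:ℝ) ^ σ / ((2:ℝ) ^ σ - 1)) * vBt :=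
    mul_nonneg (mul_nonneg (mul_nonneg hC.le (Real.rpow_nonneg (by norm_num) _)) hGnn) hvBtnn
  have hDcpos : 0 < Dc := by rw [hDc]; linarith
  have hNpos : (0:ℝ) < N := by
    have : 0 < N := hN
    exact_mod_cast this
  refine ⟨N * Dc, mul_pos hNpos hDcpos, ?_⟩
  intro α δ h hδ hδ1 hh φ hφ M2 hM2b x
  obtain ⟨hφ2, Mφ0, hMφ0⟩ := hφ
  have hM2nn : 0 ≤ M2 := le_trans (norm_nonneg _) (hM2b x)
  have hφbdd : ∀ v, |φ v| ≤ Mφ0 := fun v => by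
    have := hMφ0 0 (by norm_num) v
    rwa [norm_iteratedFDeriv_zero, Real.norm_eq_abs] at this
  obtain ⟨g, hg, hd⟩ := hA6 α
  set S : Set (Euc N) := {z : Euc N | δ < ‖z‖} with hS
  have hνS : ν α S ≤ ENNReal.ofReal (Dc * δ⁻¹ ^ σ) := by
    have hmt := QTE.measure_tail_le hσ hC hK (ν α) (hA4 α).2 g hg hd hδ hδ1
    rw [hS, hDc, hvBt]
    exact hmt
  have hfin : ν α S < ∞ := lt_of_le_of_lt hνS ENNReal.ofReal_lt_top
  haveI : IsFiniteMeasure ((ν α).restrict S) := ⟨by rwa [Measure.restrict_apply_univ]⟩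
  set ψ : Euc N → ℝ := fun v => φ (x + v) - φ x with hψ
  have hψc : Continuous ψ := by
    rw [hψ]
    exact (hφ2.continuous.comp (continuous_const.add continuous_id)).sub continuous_const
  have hψm : Measurable ψ := hψc.measurable
  have hψb : ∀ v, |ψ v| ≤ 2 * Mφ0 := by
    intro v
    simp only [hψ]
    calc |φ (x + v) - φ x| ≤ |φ (x + v)| + |φ x| := abs_sub _ _
    _ ≤ Mφ0 + Mφ0 := add_le_add (hφbdd _) (hφbdd _)
    _ = 2 * Mφ0 := by ring
  have htay : ∀ y p : Euc N, |ψ p - ψ y - (fderiv ℝ φ (x + y)) (p - y)| ≤ M2 * ‖p - y‖ ^ 2 := by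
    intro y p
    have h1 := QTE.taylor2 hφ2 hM2b (x + y) (x + p)
    have heq : x + p - (x + y) = p - y := by abel
    rw [heq] at h1
    have h2 : ψ p - ψ y = φ (x + p) - φ (x + y) := by simp only [hψ]; ring
    rw [h2]
    exact h1
  have hkey := QTE.key_estimate hh ((ν α).restrict S) (η α) (hηm α) ψ hψm hψb
    (fun y => fderiv ℝ φ (x + y)) hM2nn htay
  have hIt : Itrunc (η α) (ν α) δ φ x = ∫ z, ψ (η α z) ∂((ν α).restrict S) := rfl
  have hQ : quadOp (η α) (ν α) δ h φ x
      = ∑' j : Fin N → ℤ, ψ (gridPt N h j) * ∫ z, wt h j (η α z) ∂((ν α).restrict S) := rfl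
  rw [hIt, hQ]
  refine le_trans hkey ?_
  rw [Measure.restrict_apply_univ]
  have htR : (ν α S).toReal ≤ Dc * δ⁻¹ ^ σ :=
    ENNReal.toReal_le_of_le_ofReal
      (mul_nonneg hDcpos.le (Real.rpow_nonneg (inv_nonneg.mpr hδ.le) σ)) hνS
  calc (N:ℝ) * M2 * h ^ 2 * (ν α S).toReal ≤ (N:ℝ) * M2 * h ^ 2 * (Dc * δ⁻¹ ^ σ) := by
        apply mul_le_mul_of_nonneg_left htR
        exact mul_nonneg (mul_nonneg (Nat.cast_nonneg N) hM2nn) (sq_nonneg h)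
  _ = (N:ℝ) * Dc * (h ^ 2 / δ ^ σ) * M2 := by
        rw [Real.inv_rpow hδ.le σ, div_eq_mul_inv]
        ring
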